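/- Let m/n ∈ (0,1/2) in lowest terms with m > 1, and let u/v be the left Farey parent of m/n (so mv - nu = 1, 0 < v < n). Let R = O[m, n-1] (the orbit segment of m under addition of m mod n ending at n-1), which has cardinality n - v. Define ψ : ℤ/nℤ → ℤ/vℤ by ψ(k) = k - #(R ∩ [0,k]). Then ψ(0) = 0, ψ(m-1) = ψ(m) = u, ψ(n-1) = v - 1, and ψ is a (weakly) increasing surjection. -/

import Mathlib

/-- The least κ ≥ 0 with r + κm ≡ s (mod n). -/
noncomputable def kappaLeast (n m r s : ℕ) : ℕ :=
  sInf {j : ℕ | ((r + j * m : ℕ) : ZMod n) = (s : ZMod n)}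

/-- The orbit segment O_{m/n}[r,s]. -/
noncomputable def orbSeg (n m r s : ℕ) : Finset (ZMod n) :=
  (Finset.range (kappaLeast n m r s + 1)).image (fun j => ((r + j * m : ℕ) : ZMod n))

/-- ψ(k) = k - #(R ∩ [0,k]) where R = O_{m/n}[m, n-1]. -/
noncomputable def psiFun (n m k : ℕ) : ℕ :=
  k - ((orbSeg n m m (n - 1)).filter (fun x => x.val ≤ k)).card

private lemma ivt_nat (f : ℕ → ℕ) (h0 : f 0 = 0) (hstep : ∀ k, f (k+1) ≤ f k + 1)
    (N j : ℕ) (hj : j ≤ f N) : ∃ k, k ≤ N ∧ f k = j := by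
  induction N with
  | zero => exact ⟨0, le_refl 0, by omega⟩
  | succ N ih =>
    by_cases h : j ≤ f N
    · obtain ⟨k, hk, hfk⟩ := ih h; exact ⟨k, by omega, hfk⟩
    · have := hstep N; exact ⟨N+1, le_refl _, by omega⟩

/-- #R = n - v, ψ(0) = 0, ψ(m-1) = ψ(m) = u, ψ(n-1) = v-1, and
ψ is a weakly increasing surjection from {0,…,n-1} onto {0,…,v-1}. -/
theorem psi_props (m n u v : ℕ) (hm : 1 < m) (h2 : 2 * m < n) (hmn : Nat.Coprime m n)
    (hv0 : 0 < v) (hvn : v < n) (huv : Nat.Coprime u v)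
    (hfarey : (m : ℤ) * v - (n : ℤ) * u = 1) :
    (orbSeg n m m (n - 1)).card = n - v ∧
    psiFun n m 0 = 0 ∧
    psiFun n m (m - 1) = u ∧
    psiFun n m m = u ∧
    psiFun n m (n - 1) = v - 1 ∧
    (∀ k k' : ℕ, k ≤ k' → k' < n → psiFun n m k ≤ psiFun n m k') ∧
    (∀ j : ℕ, j < v → ∃ k : ℕ, k < n ∧ psiFun n m k = j) := by
  haveI : NeZero n := ⟨by omega⟩
  have hfnat : m * v = n * u + 1 := by
    have h : (m * v : ℤ) = n * u + 1 := by linarith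
    exact_mod_cast h
  have humlt : u < m := by
    have h1 : m * v ≤ m * n := Nat.mul_le_mul_left m hvn.le
    have h2' : n * u < n * m := by rw [mul_comm n m]; omega
    exact Nat.lt_of_mul_lt_mul_left h2'
  have hmv : (m : ZMod n) * (v : ZMod n) = 1 := by
    have h : ((m * v : ℕ) : ZMod n) = ((n * u + 1 : ℕ) : ZMod n) := by rw [hfnat]
    push_cast at h
    rw [ZMod.natCast_self] at h
    simpa using h
  have hvalcast : ∀ y : ZMod n, ((y.val : ℕ) : ZMod n) = y := fun y => ZMod.natCast_rightInverse y
  -- kappa computation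
  have hkap : kappaLeast n m m (n - 1) = n - v - 1 := by
    have e1 : ((n - 1 : ℕ) : ZMod n) = -1 := by
      rw [Nat.cast_sub (by omega)]; simp
    have e2 : ((n - v : ℕ) : ZMod n) = -(v : ZMod n) := by
      rw [Nat.cast_sub (by omega)]; simp
    have hset : {j : ℕ | ((m + j * m : ℕ) : ZMod n) = ((n - 1 : ℕ) : ZMod n)}
        = {j : ℕ | (1 + j) % n = (n - v) % n} := by
      ext j
      simp only [Set.mem_setOf_eq]
      rw [← ZMod.natCast_eq_natCast_iff']
      constructor
      · intro h
        rw [e1] at h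
        push_cast at h
        rw [e2]
        push_cast
        linear_combination (v : ZMod n) * h - (1 + (j : ZMod n)) * hmv
      · intro h
        rw [e2] at h
        push_cast at h
        rw [e1]
        push_cast
        linear_combination (m : ZMod n) * h - hmv
    rw [kappaLeast, hset]
    have hmem : (n - v - 1) ∈ {j : ℕ | (1 + j) % n = (n - v) % n} := by
      simp only [Set.mem_setOf_eq]
      congr 1
      omega
    apply le_antisymm
    · exact Nat.sInf_le hmem
    · apply le_csInf ⟨_, hmem⟩
      intro j hj
      simp only [Set.mem_setOf_eq] at hj
      have h1 : (n - v) % n = n - v := Nat.mod_eq_of_lt (by omega)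
      rcases le_or_gt (n - v - 1) j with h | h
      · exact h
      · exfalso
        have h3 : (1 + j) % n = 1 + j := Nat.mod_eq_of_lt (by omega)
        omega
  -- membership characterization
  have hRmem : ∀ x : ZMod n, x ∈ orbSeg n m m (n - 1) ↔
      (1 ≤ (x * (v : ZMod n)).val ∧ (x * (v : ZMod n)).val ≤ n - v) := by
    intro x
    rw [orbSeg, hkap, Finset.mem_image]
    constructor
    · rintro ⟨j, hj, rfl⟩
      rw [Finset.mem_range] at hj
      have hxv : ((m + j * m : ℕ) : ZMod n) * (v : ZMod n) = ((1 + j : ℕ) : ZMod n) := by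
        push_cast
        linear_combination (1 + (j : ZMod n)) * hmv
      rw [hxv, ZMod.val_cast_of_lt (by omega)]
      omega
    · rintro ⟨h1, hle⟩
      refine ⟨(x * (v : ZMod n)).val - 1, Finset.mem_range.mpr (by omega), ?_⟩
      set k := (x * (v : ZMod n)).val with hk
      have hmul : (m + (k - 1) * m : ℕ) = k * m := by
        have h3 : (k - 1) * m = k * m - m := by rw [Nat.sub_one_mul]
        have h4 : m ≤ k * m := Nat.le_mul_of_pos_left m (by omega)
        omega
      rw [hmul]
      calc ((k * m : ℕ) : ZMod n) = ((k : ℕ) : ZMod n) * (m : ZMod n) := by push_cast; ring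
        _ = (x * (v : ZMod n)) * (m : ZMod n) := by rw [hk, hvalcast]
        _ = x := by linear_combination x * hmv
  -- cardinality of R
  have hcard : (orbSeg n m m (n - 1)).card = n - v := by
    rw [orbSeg, hkap]
    have hnn : n - v - 1 + 1 = n - v := by omega
    rw [hnn, Finset.card_image_of_injOn, Finset.card_range]
    intro a ha b hb hab
    simp only [Finset.coe_range, Set.mem_Iio] at ha hb
    have h2' : ((1 + a : ℕ) : ZMod n) = ((1 + b : ℕ) : ZMod n) := by
      push_cast at hab ⊢
      linear_combination (v : ZMod n) * hab - ((a : ZMod n) - (b : ZMod n)) * hmv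
    rw [ZMod.natCast_eq_natCast_iff'] at h2'
    rw [Nat.mod_eq_of_lt (by omega), Nat.mod_eq_of_lt (by omega)] at h2'
    omega
  have hval_pos : ∀ x ∈ orbSeg n m m (n - 1), 1 ≤ x.val := by
    intro x hxR
    rcases Nat.eq_zero_or_pos x.val with h | h
    · exfalso
      have hx0 : x = 0 := by rw [← hvalcast x, h, Nat.cast_zero]
      rw [hx0, hRmem] at hxR
      rw [zero_mul, ZMod.val_zero] at hxR
      omega
    · exact h
  -- counting function
  set c : ℕ → ℕ := fun k => ((orbSeg n m m (n - 1)).filter (fun x => x.val ≤ k)).card with hcdef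
  have hpsi : ∀ k, psiFun n m k = k - c k := fun k => rfl
  have hc_le : ∀ k, c k ≤ k := by
    intro k
    have h1 : c k ≤ (Finset.Icc 1 k).card := by
      apply Finset.card_le_card_of_injOn ZMod.val
      · intro x hx
        rw [Finset.mem_coe, Finset.mem_filter] at hx
        rw [Finset.mem_coe, Finset.mem_Icc]
        exact ⟨hval_pos x hx.1, hx.2⟩
      · intro a _ b _ hab
        rw [← hvalcast a, ← hvalcast b, hab]
    simpa using h1
  have hcmono : ∀ k k', k ≤ k' → c k ≤ c k' := by
    intro k k' hkk'
    apply Finset.card_le_card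
    intro x hx
    rw [Finset.mem_filter] at hx ⊢
    exact ⟨hx.1, by omega⟩
  have hcstep : ∀ k, c (k + 1) ≤ c k + 1 := by
    intro k
    have hsp : (orbSeg n m m (n - 1)).filter (fun x => x.val ≤ k + 1)
        = (orbSeg n m m (n - 1)).filter (fun x => x.val ≤ k)
          ∪ (orbSeg n m m (n - 1)).filter (fun x => x.val = k + 1) := by
      rw [← Finset.filter_or]
      apply Finset.filter_congr
      intro x _
      omega
    calc c (k + 1) = ((orbSeg n m m (n - 1)).filter (fun x => x.val ≤ k)
            ∪ (orbSeg n m m (n - 1)).filter (fun x => x.val = k + 1)).card := by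
          rw [← hsp]
      _ ≤ c k + ((orbSeg n m m (n - 1)).filter (fun x => x.val = k + 1)).card :=
          Finset.card_union_le _ _
      _ ≤ c k + 1 := by
          apply Nat.add_le_add_left
          apply Finset.card_le_one.mpr
          intro a ha b hb
          rw [Finset.mem_filter] at ha hb
          rw [← hvalcast a, ← hvalcast b, ha.2, hb.2]
  have hclin : ∀ k d, c (k + d) ≤ c k + d := by
    intro k d
    induction d with
    | zero => simp
    | succ d ih =>
      have h1 := hcstep (k + d)
      have h2 : c (k + (d + 1)) = c (k + d + 1) := rfl
      omega
  -- count of all elements with small val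
  have hcntAll : ∀ k, k < n → (Finset.univ.filter (fun x : ZMod n => x.val ≤ k)).card = k + 1 := by
    intro k hk
    have himg : Finset.univ.filter (fun x : ZMod n => x.val ≤ k)
        = (Finset.range (k + 1)).image (fun i : ℕ => (i : ZMod n)) := by
      ext x
      simp only [Finset.mem_filter, Finset.mem_univ, true_and, Finset.mem_image, Finset.mem_range]
      constructor
      · intro h
        exact ⟨x.val, by omega, hvalcast x⟩
      · rintro ⟨i, hi, rfl⟩
        rw [ZMod.val_cast_of_lt (by omega)]
        omega
    rw [himg, Finset.card_image_of_injOn, Finset.card_range]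
    intro a ha b hb hab
    simp only [Finset.coe_range, Set.mem_Iio] at ha hb
    have h := (ZMod.natCast_eq_natCast_iff' a b n).mp hab
    rwa [Nat.mod_eq_of_lt (by omega), Nat.mod_eq_of_lt (by omega)] at h
  -- x*v = 0 iff x = 0
  have hxv0 : ∀ x : ZMod n, (x * (v : ZMod n)).val = 0 ↔ x = 0 := by
    intro x
    constructor
    · intro h0
      have h1 : x * (v : ZMod n) = 0 := by rw [← hvalcast (x * (v : ZMod n)), h0, Nat.cast_zero]
      calc x = x * ((m : ZMod n) * (v : ZMod n)) := by rw [hmv, mul_one]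
        _ = (x * (v : ZMod n)) * (m : ZMod n) := by ring
        _ = 0 := by rw [h1, zero_mul]
    · rintro rfl
      rw [zero_mul, ZMod.val_zero]
  -- the key count : #B' = u
  have hBcard : (Finset.univ.filter (fun x : ZMod n =>
      x.val ≤ m - 1 ∧ n - v < (x * (v : ZMod n)).val)).card = u := by
    have hIcc : (Finset.Icc 1 u).card = u := by simp
    rw [← hIcc]
    symm
    apply Finset.card_bij (fun t _ => ((t * n % m : ℕ) : ZMod n))
    · -- maps into the filter
      intro t ht
      rw [Finset.mem_Icc] at ht
      rw [Finset.mem_filter]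
      have hmodlt : t * n % m < m := Nat.mod_lt _ (by omega)
      have hdivlt : t * n / m < v := by
        apply Nat.div_lt_of_lt_mul
        calc t * n ≤ u * n := Nat.mul_le_mul_right n ht.2
          _ < m * v := by rw [mul_comm u n]; omega
      have hdivpos : 1 ≤ t * n / m := by
        apply (Nat.one_le_div_iff (by omega)).mpr
        calc m ≤ n := by omega
          _ ≤ t * n := Nat.le_mul_of_pos_left n (by omega)
      refine ⟨Finset.mem_univ _, ?_, ?_⟩
      · rw [ZMod.val_cast_of_lt (by omega)]
        omega
      · have hident := Nat.div_add_mod (t * n) m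
        have hc1 : ((t * n % m : ℕ) : ZMod n) = -((m : ZMod n)) * ((t * n / m : ℕ) : ZMod n) := by
          have hcg := congrArg (Nat.cast : ℕ → ZMod n) hident
          push_cast at hcg
          rw [ZMod.natCast_self] at hcg
          linear_combination hcg
        have hc2 : ((n - t * n / m : ℕ) : ZMod n) = -((t * n / m : ℕ) : ZMod n) := by
          rw [Nat.cast_sub (by omega)]; simp
        have hxv : ((t * n % m : ℕ) : ZMod n) * (v : ZMod n) = ((n - t * n / m : ℕ) : ZMod n) := by
          rw [hc1, hc2]
          linear_combination -((t * n / m : ℕ) : ZMod n) * hmv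
        rw [hxv, ZMod.val_cast_of_lt (by omega)]
        omega
    · -- injective
      intro a ha b hb hab
      rw [Finset.mem_Icc] at ha hb
      have h1 : a * n % m < m := Nat.mod_lt _ (by omega)
      have h1' : b * n % m < m := Nat.mod_lt _ (by omega)
      have hval := congrArg ZMod.val hab
      rw [ZMod.val_cast_of_lt (by omega), ZMod.val_cast_of_lt (by omega)] at hval
      have hmeq : a ≡ b [MOD m] := Nat.ModEq.cancel_right_of_coprime hmn hval
      have hout : a % m = b % m := hmeq
      rw [Nat.mod_eq_of_lt (by omega), Nat.mod_eq_of_lt (by omega)] at hout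
      exact hout
    · -- surjective
      intro x hx
      rw [Finset.mem_filter] at hx
      obtain ⟨-, hx1, hx2⟩ := hx
      have hwlt : (x * (v : ZMod n)).val < n := ZMod.val_lt _
      have hxvallt : x.val < n := ZMod.val_lt x
      have hxne : x ≠ 0 := by
        intro h0
        rw [h0, zero_mul, ZMod.val_zero] at hx2
        omega
      set j := n - (x * (v : ZMod n)).val with hjdef
      have hj1 : 1 ≤ j := by omega
      have hj2 : j ≤ v - 1 := by omega
      have hjm : ((j * m : ℕ) : ZMod n) = -x := by
        have h1 : ((j : ℕ) : ZMod n) = -(((x * (v : ZMod n)).val : ℕ) : ZMod n) := by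
          rw [hjdef, Nat.cast_sub (by omega)]; simp
        rw [hvalcast] at h1
        push_cast
        rw [h1]
        linear_combination -x * hmv
      obtain ⟨q, r, hqr, hrlt⟩ : ∃ q r, j * m = n * q + r ∧ r < n :=
        ⟨j * m / n, j * m % n, (Nat.div_add_mod _ _).symm, Nat.mod_lt _ (by omega)⟩
      have hr_cast : ((r : ℕ) : ZMod n) = -x := by
        have hcg := congrArg (Nat.cast : ℕ → ZMod n) hqr
        push_cast at hcg
        rw [ZMod.natCast_self] at hcg
        have hjm' : (j : ZMod n) * (m : ZMod n) = -x := by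
          rw [← hjm]; push_cast; ring
        linear_combination hjm' - hcg
      have hrval : r = n - x.val := by
        have h7 : ((r : ℕ) : ZMod n).val = (-x).val := by rw [hr_cast]
        rw [ZMod.val_cast_of_lt hrlt, ZMod.neg_val] at h7
        simp only [hxne, if_false] at h7
        exact h7
      have hrs : r + x.val = n := by omega
      refine ⟨q + 1, Finset.mem_Icc.mpr ⟨by omega, ?_⟩, ?_⟩
      · -- q + 1 ≤ u
        have h8 : j * m ≤ (v - 1) * m := Nat.mul_le_mul_right m hj2
        have h9 : (v - 1) * m + m = v * m := by
          obtain ⟨v', rfl⟩ : ∃ v', v = v' + 1 := ⟨v - 1, by omega⟩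
          simp only [Nat.add_sub_cancel]
          ring
        have h10 : v * m = n * u + 1 := by rw [mul_comm]; exact hfnat
        have hxm1 : x.val + 1 ≤ m := by omega
        have h11 : n * (q + 1) ≤ n * u := by
          have he : n * (q + 1) = n * q + n := by ring
          linarith
        exact Nat.le_of_mul_le_mul_left h11 (by omega)
      · have h12 : (q + 1) * n = j * m + x.val := by
          have he : (q + 1) * n = n * q + n := by ring
          linarith
        have h13 : (q + 1) * n % m = x.val := by
          rw [h12, mul_comm j m, Nat.mul_add_mod]
          exact Nat.mod_eq_of_lt (by omega)
        rw [h13]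
        exact hvalcast x
  -- c (m-1) = m - 1 - u
  have hcm1 : c (m - 1) = m - 1 - u := by
    have htot : (Finset.univ.filter (fun x : ZMod n => x.val ≤ m - 1)).card = m := by
      rw [hcntAll (m - 1) (by omega)]; omega
    have hdisj :
        Disjoint (Finset.univ.filter (fun x : ZMod n => x.val ≤ m - 1 ∧ x ∈ orbSeg n m m (n - 1)))
          (Finset.univ.filter (fun x : ZMod n => x.val ≤ m - 1 ∧ x ∉ orbSeg n m m (n - 1))) := by
      rw [Finset.disjoint_left]
      intro a ha hb
      rw [Finset.mem_filter] at ha hb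
      exact hb.2.2 ha.2.2
    have hsp : Finset.univ.filter (fun x : ZMod n => x.val ≤ m - 1)
        = (Finset.univ.filter (fun x : ZMod n => x.val ≤ m - 1 ∧ x ∈ orbSeg n m m (n - 1)))
          ∪ (Finset.univ.filter (fun x : ZMod n => x.val ≤ m - 1 ∧ x ∉ orbSeg n m m (n - 1))) := by
      rw [← Finset.filter_or]
      apply Finset.filter_congr
      intro x _
      by_cases h : x ∈ orbSeg n m m (n - 1) <;> simp [h]
    have hfirst : (Finset.univ.filter (fun x : ZMod n => x.val ≤ m - 1 ∧ x ∈ orbSeg n m m (n - 1)))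
        = (orbSeg n m m (n - 1)).filter (fun x => x.val ≤ m - 1) := by
      ext x
      simp only [Finset.mem_filter, Finset.mem_univ, true_and]
      tauto
    have hB : Finset.univ.filter (fun x : ZMod n => x.val ≤ m - 1 ∧ x ∉ orbSeg n m m (n - 1))
        = insert (0 : ZMod n)
          (Finset.univ.filter (fun x : ZMod n => x.val ≤ m - 1 ∧ n - v < (x * (v : ZMod n)).val)) := by
      ext x
      simp only [Finset.mem_filter, Finset.mem_univ, true_and, Finset.mem_insert, hRmem]
      constructor
      · rintro ⟨h1, hnot⟩
        by_cases hx0 : x = 0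
        · left; exact hx0
        · right
          refine ⟨h1, ?_⟩
          have hwne : (x * (v : ZMod n)).val ≠ 0 := fun h0 => hx0 ((hxv0 x).mp h0)
          omega
      · rintro (rfl | ⟨h1, hgt⟩)
        · constructor
          · rw [ZMod.val_zero]; omega
          · rw [zero_mul, ZMod.val_zero]; omega
        · refine ⟨h1, ?_⟩
          omega
    have h0notin : (0 : ZMod n) ∉
        Finset.univ.filter (fun x : ZMod n => x.val ≤ m - 1 ∧ n - v < (x * (v : ZMod n)).val) := by
      rw [Finset.mem_filter]
      rintro ⟨-, -, hgt⟩
      rw [zero_mul, ZMod.val_zero] at hgt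
      omega
    have hBc : (Finset.univ.filter
        (fun x : ZMod n => x.val ≤ m - 1 ∧ x ∉ orbSeg n m m (n - 1))).card = u + 1 := by
      rw [hB, Finset.card_insert_of_notMem h0notin, hBcard]
    have hsum := htot
    rw [hsp, Finset.card_union_of_disjoint hdisj, hfirst, hBc] at hsum
    have hcc : c (m - 1) = ((orbSeg n m m (n - 1)).filter (fun x => x.val ≤ m - 1)).card := rfl
    omega
  -- c m = c (m-1) + 1
  have hmmem : ((m : ℕ) : ZMod n) ∈ orbSeg n m m (n - 1) := by
    rw [hRmem]
    have hcast : ((m : ℕ) : ZMod n) * (v : ZMod n) = ((1 : ℕ) : ZMod n) := by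
      push_cast
      exact hmv
    rw [hcast, ZMod.val_cast_of_lt (by omega)]
    omega
  have hfm : (orbSeg n m m (n - 1)).filter (fun x => x.val = m) = {((m : ℕ) : ZMod n)} := by
    ext x
    simp only [Finset.mem_filter, Finset.mem_singleton]
    constructor
    · rintro ⟨hxR, hxv⟩
      rw [← hvalcast x, hxv]
    · rintro rfl
      exact ⟨hmmem, ZMod.val_cast_of_lt (by omega)⟩
  have hcm : c m = c (m - 1) + 1 := by
    have hsp : (orbSeg n m m (n - 1)).filter (fun x => x.val ≤ m)
        = (orbSeg n m m (n - 1)).filter (fun x => x.val ≤ m - 1)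
          ∪ (orbSeg n m m (n - 1)).filter (fun x => x.val = m) := by
      rw [← Finset.filter_or]
      apply Finset.filter_congr
      intro x _
      omega
    have hdisj : Disjoint ((orbSeg n m m (n - 1)).filter (fun x => x.val ≤ m - 1))
        ((orbSeg n m m (n - 1)).filter (fun x => x.val = m)) := by
      rw [Finset.disjoint_left]
      intro a ha hb
      rw [Finset.mem_filter] at ha hb
      omega
    have : c m = ((orbSeg n m m (n - 1)).filter (fun x => x.val ≤ m)).card := rfl
    rw [this, hsp, Finset.card_union_of_disjoint hdisj, hfm, Finset.card_singleton]
  -- c 0 = 0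
  have hc0 : c 0 = 0 := by
    have e : c 0 = ((orbSeg n m m (n - 1)).filter (fun x => x.val ≤ 0)).card := rfl
    rw [e, Finset.card_eq_zero, Finset.filter_eq_empty_iff]
    intro x hxR
    have := hval_pos x hxR
    omega
  -- c (n-1) = n - v
  have hcn1 : c (n - 1) = n - v := by
    have hall : (orbSeg n m m (n - 1)).filter (fun x => x.val ≤ n - 1) = orbSeg n m m (n - 1) := by
      apply Finset.filter_true_of_mem
      intro x _
      have := ZMod.val_lt x
      omega
    have : c (n - 1) = ((orbSeg n m m (n - 1)).filter (fun x => x.val ≤ n - 1)).card := rfl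
    rw [this, hall, hcard]
  refine ⟨hcard, ?_, ?_, ?_, ?_, ?_, ?_⟩
  · rw [hpsi, hc0]
  · rw [hpsi, hcm1]; omega
  · rw [hpsi, hcm, hcm1]; omega
  · rw [hpsi, hcn1]; omega
  · intro k k' hkk' _
    rw [hpsi, hpsi]
    have h1 : c k' ≤ c k + (k' - k) := by
      have := hclin k (k' - k)
      rwa [Nat.add_sub_cancel' hkk'] at this
    have := hc_le k
    have := hc_le k'
    have := hcmono k k' hkk'
    omega
  · intro j hj
    have hstep : ∀ k, psiFun n m (k + 1) ≤ psiFun n m k + 1 := by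
      intro k
      rw [hpsi, hpsi]
      have := hcmono k (k + 1) (by omega)
      have := hc_le k
      omega
    have h0 : psiFun n m 0 = 0 := by rw [hpsi, hc0]
    have hN : psiFun n m (n - 1) = v - 1 := by rw [hpsi, hcn1]; omega
    obtain ⟨k, hk, hfk⟩ := ivt_nat (psiFun n m) h0 hstep (n - 1) j (by omega)
    exact ⟨k, by omega, hfk⟩
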